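/- Let A_1, …, A_N be n×n nonnegative matrices with μ(A_i) ≤ 1 for every i, and suppose there is a nonempty set E = {v_1, …, v_m} of common max eigenvectors: each v_t ∈ ℝ_{≥0}^n is nonzero and for every i there is λ_{i,t} ≥ 0 with A_i ⊗ v_t = λ_{i,t}·v_t. Let p ≥ 1 and let ω ∈ {1,…,N}^p be a word containing every letter 1, …, N at least once, with associated product A_ω. Then for every x of the form x = α_1 v_1 ⊕ α_2 v_2 ⊕ ⋯ ⊕ α_m v_m (entrywise maximum, with α_t ≥ 0), the sequence A_ω^{⊗k} ⊗ x converges, as k → ∞, to a vector ξ_x satisfying A_i ⊗ ξ_x = ξ_x for every i = 1, …, N. -/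

import Mathlib

open Filter Topology

/-- Max-times product of two square nonnegative matrices. -/
noncomputable def mProd {m : Type*} [Fintype m] (A B : Matrix m m NNReal) : Matrix m m NNReal :=
  fun i j => Finset.univ.sup fun k => A i k * B k j

/-- Max-times powers: `mPow A 0 = I`, `mPow A (k+1) = A ⊗ mPow A k`. -/
noncomputable def mPow {m : Type*} [Fintype m] [DecidableEq m] (A : Matrix m m NNReal) :
    ℕ → Matrix m m NNReal
  | 0 => 1
  | k + 1 => mProd A (mPow A k)

/-- Max-times action of a matrix on a nonnegative vector. -/
noncomputable def mVec {m : Type*} [Fintype m] (A : Matrix m m NNReal) (x : m → NNReal) :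
    m → NNReal :=
  fun i => Finset.univ.sup fun k => A i k * x k

/-- Maximum circuit geometric mean of a nonnegative matrix. -/
noncomputable def mu {m : Type*} [Fintype m] [DecidableEq m] (A : Matrix m m NNReal) : NNReal :=
  (Finset.Icc 1 (Fintype.card m)).sup fun ℓ =>
    Finset.univ.sup fun i => (mPow A ℓ i i) ^ ((ℓ : ℝ)⁻¹)

/-- The max-times product `A_{ω_p} ⊗ ⋯ ⊗ A_{ω_1}` associated to a word `ω`. -/
noncomputable def wordProd {m : Type*} [Fintype m] [DecidableEq m] {N : ℕ}
    (A : Fin N → Matrix m m NNReal) : ∀ {p : ℕ}, (Fin p → Fin N) → Matrix m m NNReal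
  | 0, _ => 1
  | p + 1, ω => mProd (A (ω (Fin.last p))) (wordProd A fun i : Fin p => ω i.castSucc)

/-! ### Auxiliary lemmas -/

lemma mVec_one {n : ℕ} (x : Fin n → NNReal) :
    mVec (1 : Matrix (Fin n) (Fin n) NNReal) x = x := by
  funext i
  unfold mVec
  apply le_antisymm
  · refine Finset.sup_le fun k _ => ?_
    rcases eq_or_ne i k with h | h
    · simp [Matrix.one_apply, h]
    · simp [Matrix.one_apply, h]
  · have := Finset.le_sup (f := fun k => (1 : Matrix (Fin n) (Fin n) NNReal) i k * x k)
      (Finset.mem_univ i)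
    simpa [Matrix.one_apply] using this

lemma mVec_mProd {n : ℕ} (A B : Matrix (Fin n) (Fin n) NNReal) (x : Fin n → NNReal) :
    mVec (mProd A B) x = mVec A (mVec B x) := by
  funext i
  unfold mVec mProd
  simp_rw [NNReal.finset_sup_mul, NNReal.mul_finset_sup, mul_assoc]
  exact Finset.sup_comm _ _ _

lemma mVec_smul {n : ℕ} (A : Matrix (Fin n) (Fin n) NNReal) (c : NNReal) (y : Fin n → NNReal) :
    mVec A (fun j => c * y j) = fun i => c * mVec A y i := by
  funext i
  unfold mVec
  simp_rw [NNReal.mul_finset_sup, mul_left_comm]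

lemma mVec_supvec {n m : ℕ} (A : Matrix (Fin n) (Fin n) NNReal) (w : Fin m → Fin n → NNReal) :
    mVec A (fun j => Finset.univ.sup fun t => w t j)
      = fun i => Finset.univ.sup fun t => mVec A (w t) i := by
  funext i
  unfold mVec
  simp_rw [NNReal.mul_finset_sup]
  exact Finset.sup_comm _ _ _

/-- The value of a max-times power dominates the product of the weights along any path. -/
lemma path_le {n : ℕ} (A : Matrix (Fin n) (Fin n) NNReal) :
    ∀ (ℓ : ℕ) (g : ℕ → Fin n),
      (∏ s ∈ Finset.range ℓ, A (g s) (g (s + 1))) ≤ mPow A ℓ (g 0) (g ℓ)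
  | 0, g => by simp [mPow, Matrix.one_apply]
  | ℓ + 1, g => by
    have ih := path_le A ℓ (fun s => g (s + 1))
    calc (∏ s ∈ Finset.range (ℓ + 1), A (g s) (g (s + 1)))
        = A (g 0) (g 1) * ∏ s ∈ Finset.range ℓ, A (g (s + 1)) (g (s + 1 + 1)) := by
          rw [Finset.prod_range_succ']; ring
      _ ≤ A (g 0) (g 1) * mPow A ℓ (g 1) (g (ℓ + 1)) := mul_le_mul_right ih _
      _ ≤ mPow A (ℓ + 1) (g 0) (g (ℓ + 1)) := by
          show _ ≤ mProd A (mPow A ℓ) (g 0) (g (ℓ + 1))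
          exact Finset.le_sup (f := fun k => A (g 0) k * mPow A ℓ k (g (ℓ + 1)))
            (Finset.mem_univ (g 1))

/-- Any max eigenvalue of a nonzero nonnegative eigenvector is at most `mu A`. -/
lemma eig_le_mu {n : ℕ} (A : Matrix (Fin n) (Fin n) NNReal) (v : Fin n → NNReal)
    (hv : v ≠ 0) (lam : NNReal) (h : mVec A v = fun j => lam * v j) : lam ≤ mu A := by
  rcases eq_or_ne lam 0 with h0 | h0
  · simp [h0]
  obtain ⟨j0, hj0⟩ : ∃ j, v j ≠ 0 := by
    by_contra hcon
    push_neg at hcon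
    exact hv (funext fun j => hcon j)
  have step : ∀ j : Fin n, v j ≠ 0 → ∃ k, v k ≠ 0 ∧ lam * v j ≤ A j k * v k := by
    intro j hj
    have hsup : (Finset.univ.sup fun k => A j k * v k) = lam * v j := congrFun h j
    obtain ⟨k, _, hk⟩ := Finset.exists_mem_eq_sup Finset.univ
      ⟨j, Finset.mem_univ j⟩ (fun k => A j k * v k)
    have hkv : A j k * v k = lam * v j := by rw [← hk, hsup]
    refine ⟨k, ?_, hkv.ge⟩
    intro hk0
    exact mul_ne_zero h0 hj (by simpa [hk0] using hkv.symm)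
  let f : ℕ → {j : Fin n // v j ≠ 0} := fun s =>
    Nat.rec ⟨j0, hj0⟩ (fun _ prev => ⟨(step prev.1 prev.2).choose,
      (step prev.1 prev.2).choose_spec.1⟩) s
  have hf : ∀ s, lam * v (f s).1 ≤ A (f s).1 (f (s + 1)).1 * v (f (s + 1)).1 :=
    fun s => (step (f s).1 (f s).2).choose_spec.2
  have chain : ∀ (a ℓ : ℕ),
      lam ^ ℓ * v (f a).1
        ≤ (∏ s ∈ Finset.range ℓ, A (f (a + s)).1 (f (a + s + 1)).1) * v (f (a + ℓ)).1 := by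
    intro a ℓ
    induction ℓ with
    | zero => simp
    | succ ℓ ih =>
      calc lam ^ (ℓ + 1) * v (f a).1 = lam * (lam ^ ℓ * v (f a).1) := by ring
        _ ≤ lam * ((∏ s ∈ Finset.range ℓ, A (f (a + s)).1 (f (a + s + 1)).1) * v (f (a + ℓ)).1) :=
            mul_le_mul_right ih _
        _ = (∏ s ∈ Finset.range ℓ, A (f (a + s)).1 (f (a + s + 1)).1) * (lam * v (f (a + ℓ)).1) := by
            ring
        _ ≤ (∏ s ∈ Finset.range ℓ, A (f (a + s)).1 (f (a + s + 1)).1)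
            * (A (f (a + ℓ)).1 (f (a + ℓ + 1)).1 * v (f (a + ℓ + 1)).1) :=
            mul_le_mul_right (hf (a + ℓ)) _
        _ = (∏ s ∈ Finset.range (ℓ + 1), A (f (a + s)).1 (f (a + s + 1)).1) * v (f (a + (ℓ + 1))).1 := by
            rw [Finset.prod_range_succ]
            exact (mul_assoc _ _ _).symm
  -- pigeonhole
  obtain ⟨a, b, hab, hfab⟩ := Fintype.exists_ne_map_eq_of_card_lt
    (fun s : Fin (n + 1) => (f s.1).1) (by simp)
  wlog hlt : (a : ℕ) < (b : ℕ) generalizing a b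
  · exact this b a hab.symm hfab.symm (by omega)
  set ℓ : ℕ := (b : ℕ) - (a : ℕ) with hℓ
  have hℓ1 : 1 ≤ ℓ := by omega
  have hℓn : ℓ ≤ n := by have := b.2; omega
  have hb : (a : ℕ) + ℓ = (b : ℕ) := by omega
  have hchain := chain (a : ℕ) ℓ
  rw [hb] at hchain
  have hpath := path_le A ℓ (fun s => (f ((a : ℕ) + s)).1)
  have hg0 : (f ((a : ℕ) + 0)).1 = (f (a : ℕ)).1 := by norm_num
  have hgℓ : (f ((a : ℕ) + ℓ)).1 = (f (a : ℕ)).1 := by rw [hb]; exact hfab.symm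
  set j : Fin n := (f (a : ℕ)).1 with hj
  have hvb : v (f (b : ℕ)).1 = v j := by rw [← hfab]
  have hkey : lam ^ ℓ * v j ≤ mPow A ℓ j j * v j := by
    calc lam ^ ℓ * v j ≤ (∏ s ∈ Finset.range ℓ, A (f ((a : ℕ) + s)).1 (f ((a : ℕ) + s + 1)).1)
          * v (f (b : ℕ)).1 := hchain
      _ = (∏ s ∈ Finset.range ℓ, A (f ((a : ℕ) + s)).1 (f ((a : ℕ) + s + 1)).1) * v j := by
          rw [hvb]
      _ ≤ mPow A ℓ j j * v j := by
          apply mul_le_mul_left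
          have : (∏ s ∈ Finset.range ℓ, A (f ((a : ℕ) + s)).1 (f ((a : ℕ) + s + 1)).1)
              ≤ mPow A ℓ (f ((a : ℕ) + 0)).1 (f ((a : ℕ) + ℓ)).1 := hpath
          rwa [hg0, hgℓ] at this
  have hvj : v j ≠ 0 := (f (a : ℕ)).2
  have hpow : lam ^ ℓ ≤ mPow A ℓ j j :=
    le_of_mul_le_mul_right hkey (zero_lt_iff.mpr hvj)
  have hℓ0 : (ℓ : ℝ) ≠ 0 := by positivity
  have hlam : lam ≤ (mPow A ℓ j j) ^ ((ℓ : ℝ)⁻¹) := by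
    have := NNReal.rpow_le_rpow (z := (ℓ : ℝ)⁻¹) hpow (by positivity)
    rwa [← NNReal.rpow_natCast lam ℓ, ← NNReal.rpow_mul, mul_inv_cancel₀ hℓ0,
      NNReal.rpow_one] at this
  have hmem : ℓ ∈ Finset.Icc 1 (Fintype.card (Fin n)) := by
    rw [Finset.mem_Icc, Fintype.card_fin]; exact ⟨hℓ1, hℓn⟩
  calc lam ≤ (mPow A ℓ j j) ^ ((ℓ : ℝ)⁻¹) := hlam
    _ ≤ Finset.univ.sup (fun i => (mPow A ℓ i i) ^ ((ℓ : ℝ)⁻¹)) :=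
        Finset.le_sup (f := fun i => (mPow A ℓ i i) ^ ((ℓ : ℝ)⁻¹)) (Finset.mem_univ j)
    _ ≤ mu A := Finset.le_sup (f := fun ℓ =>
        Finset.univ.sup fun i => (mPow A ℓ i i) ^ ((ℓ : ℝ)⁻¹)) hmem

/-- A common eigenvector is an eigenvector of a word product, with eigenvalue the product. -/
lemma wordProd_eig {n N : ℕ} (A : Fin N → Matrix (Fin n) (Fin n) NNReal)
    (v : Fin n → NNReal) (lam : Fin N → NNReal)
    (h : ∀ i, mVec (A i) v = fun j => lam i * v j) :
    ∀ {p : ℕ} (ω : Fin p → Fin N),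
      mVec (wordProd A ω) v = fun j => (∏ s, lam (ω s)) * v j := by
  intro p
  induction p with
  | zero => intro ω; simp [wordProd, mVec_one]
  | succ p ih =>
    intro ω
    show mVec (mProd (A (ω (Fin.last p))) (wordProd A fun i : Fin p => ω i.castSucc)) v = _
    rw [mVec_mProd, ih, mVec_smul, h]
    funext j
    rw [Fin.prod_univ_castSucc]
    ring

lemma tendsto_finset_sup' {ι : Type*} [DecidableEq ι] (s : Finset ι) (f : ι → ℕ → NNReal)
    (g : ι → NNReal) (h : ∀ t, Tendsto (f t) atTop (nhds (g t))) :
    Tendsto (fun k => s.sup fun t => f t k) atTop (nhds (s.sup g)) := by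
  induction s using Finset.induction_on with
  | empty => simpa using tendsto_const_nhds
  | insert a s hnotmem ih =>
    simp_rw [Finset.sup_insert]
    exact (h _).max ih

theorem stmt_2 (n N m p : ℕ) (A : Fin N → Matrix (Fin n) (Fin n) NNReal)
    (hmu : ∀ i, mu (A i) ≤ 1)
    (hm : 1 ≤ m) (v : Fin m → (Fin n → NNReal)) (hv0 : ∀ t, v t ≠ 0)
    (heig : ∀ i t, ∃ lam : NNReal, mVec (A i) (v t) = fun j => lam * v t j)
    (hp : 1 ≤ p) (ω : Fin p → Fin N) (hω : ∀ i : Fin N, ∃ t, ω t = i)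
    (α : Fin m → NNReal) (x : Fin n → NNReal)
    (hx : x = fun j => Finset.univ.sup fun t => α t * v t j) :
    ∃ ξ : Fin n → NNReal,
      Tendsto (fun k => mVec (mPow (wordProd A ω) k) x) atTop (nhds ξ) ∧
        ∀ i, mVec (A i) ξ = ξ := by
  classical
  -- choose eigenvalues
  set lam : Fin N → Fin m → NNReal := fun i t => (heig i t).choose with hlamdef
  have hlamspec : ∀ i t, mVec (A i) (v t) = fun j => lam i t * v t j :=
    fun i t => (heig i t).choose_spec
  have hlam1 : ∀ i t, lam i t ≤ 1 := fun i t =>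
    le_trans (eig_le_mu (A i) (v t) (hv0 t) (lam i t) (hlamspec i t)) (hmu i)
  set c : Fin m → NNReal := fun t => ∏ s, lam (ω s) t with hcdef
  have hc1 : ∀ t, c t ≤ 1 := fun t =>
    Finset.prod_le_one (fun s _ => zero_le) (fun s _ => hlam1 (ω s) t)
  have hW : ∀ t, mVec (wordProd A ω) (v t) = fun j => c t * v t j := fun t =>
    wordProd_eig A (v t) (fun i => lam i t) (fun i => hlamspec i t) ω
  -- eigenvalue 1 on each letter when c t = 1
  have hlam_one : ∀ t, c t = 1 → ∀ i, lam i t = 1 := by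
    intro t hct i
    obtain ⟨s, hs⟩ := hω i
    have h1 : lam (ω s) t * ∏ s' ∈ Finset.univ.erase s, lam (ω s') t = 1 := by
      rw [Finset.mul_prod_erase Finset.univ (fun s' => lam (ω s') t) (Finset.mem_univ s)]
      exact hct
    have h2 : (∏ s' ∈ Finset.univ.erase s, lam (ω s') t) ≤ 1 :=
      Finset.prod_le_one (fun s' _ => zero_le) (fun s' _ => hlam1 (ω s') t)
    have h3 : (1 : NNReal) ≤ lam (ω s) t := by
      calc (1 : NNReal) = lam (ω s) t * ∏ s' ∈ Finset.univ.erase s, lam (ω s') t := h1.symm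
        _ ≤ lam (ω s) t * 1 := mul_le_mul_right h2 _
        _ = lam (ω s) t := mul_one _
    rw [← hs]
    exact le_antisymm (hlam1 (ω s) t) h3
  set L : Fin m → NNReal := fun t => if c t = 1 then 1 else 0 with hLdef
  -- iterates
  have hiter : ∀ k, mVec (mPow (wordProd A ω) k) x
      = fun j => Finset.univ.sup fun t => α t * c t ^ k * v t j := by
    intro k
    induction k with
    | zero =>
      show mVec (1 : Matrix (Fin n) (Fin n) NNReal) x = _
      rw [mVec_one, hx]
      funext j
      simp
    | succ k ih =>
      show mVec (mProd (wordProd A ω) (mPow (wordProd A ω) k)) x = _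
      rw [mVec_mProd, ih,
        mVec_supvec (wordProd A ω) (fun t j => α t * c t ^ k * v t j)]
      funext j
      congr 1
      funext t
      have : (fun j => α t * c t ^ k * v t j) = fun j => (α t * c t ^ k) * v t j := rfl
      rw [this, mVec_smul, hW t]
      ring
  refine ⟨fun j => Finset.univ.sup fun t => α t * L t * v t j, ?_, ?_⟩
  · rw [tendsto_pi_nhds]
    intro j
    simp_rw [hiter]
    apply tendsto_finset_sup'
    intro t
    have hpowlim : Tendsto (fun k => c t ^ k) atTop (nhds (L t)) := by
      rcases eq_or_lt_of_le (hc1 t) with h | h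
      · simp only [hLdef, h, if_pos]
        simpa [h] using tendsto_const_nhds (α := ℕ) (x := (1 : NNReal))
      · simp only [hLdef, if_neg h.ne]
        rw [← NNReal.tendsto_coe]
        push_cast
        exact tendsto_pow_atTop_nhds_zero_of_lt_one (c t).coe_nonneg (by exact_mod_cast h)
    exact ((tendsto_const_nhds.mul hpowlim).mul tendsto_const_nhds)
  · intro i
    have hξ : (fun j => Finset.univ.sup fun t => α t * L t * v t j)
        = fun j => Finset.univ.sup fun t => (fun j' => (α t * L t) * v t j') j := rfl
    rw [hξ, mVec_supvec (A i) (fun t j => (α t * L t) * v t j)]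
    funext j
    congr 1
    funext t
    rw [mVec_smul, hlamspec i t]
    rcases eq_or_ne (c t) 1 with hct | hct
    · simp [hLdef, hct, hlam_one t hct i]
    · simp [hLdef, hct]
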